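/- For points in convex position, a flip strictly decreases the number of crossing pairs: if M is a perfect matching on a set of points in convex position and M' is obtained from M by flipping a crossing pair (replacing p1p3, p2p4 by the non-crossing pair p1p4, p2p3), then Φ_X(M') < Φ_X(M), where Φ_X counts the number of crossing pairs of segments. -/

import Mathlib

open scoped Classical

noncomputable section

/-- The plane. -/
abbrev Pl := ℝ × ℝ
/-- A segment, as an ordered pair of endpoints. -/
abbrev Seg := Pl × Pl

/-- The set of points of a segment. -/
def segSet (s : Seg) : Set Pl := segment ℝ s.1 s.2

/-- Two segments cross: they intersect in exactly one point which is
not an endpoint of either. -/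
def Cross (s t : Seg) : Prop :=
  ∃ x : Pl, segSet s ∩ segSet t = {x} ∧ x ≠ s.1 ∧ x ≠ s.2 ∧ x ≠ t.1 ∧ x ≠ t.2

/-- The line through two points. -/
def lineThrough (p q : Pl) : Set Pl := {x | Collinear ℝ ({p, q, x} : Set Pl)}

/-- A line crosses a segment: they intersect in exactly one point which is
not an endpoint of the segment. -/
def LineCross (l : Set Pl) (s : Seg) : Prop :=
  ∃ x : Pl, l ∩ segSet s = {x} ∧ x ≠ s.1 ∧ x ≠ s.2

/-- Signed side of the line through `a` and `b` on which `x` lies. -/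
def sideVal (a b x : Pl) : ℝ :=
  (b.1 - a.1) * (x.2 - a.2) - (b.2 - a.2) * (x.1 - a.1)

/-- General position: no three (distinct) points of `S` are collinear. -/
def GenPos (S : Set Pl) : Prop :=
  ∀ a ∈ S, ∀ b ∈ S, ∀ c ∈ S, a ≠ b → a ≠ c → b ≠ c → ¬ Collinear ℝ ({a, b, c} : Set Pl)

/-- Strictly convex position. -/
def ConvexPos (S : Set Pl) : Prop := ∀ p ∈ S, p ∉ convexHull ℝ (S \ {p})

/-- A set of segments is a matching: no degenerate segment and all endpoints distinct. -/
def IsMatching (M : Finset Seg) : Prop :=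
  (∀ s ∈ M, s.1 ≠ s.2) ∧
  ∀ s ∈ M, ∀ t ∈ M, s ≠ t → ({s.1, s.2} : Set Pl) ∩ {t.1, t.2} = ∅

/-- A perfect matching on the point set `P`. -/
def IsPM (P : Finset Pl) (M : Finset Seg) : Prop :=
  IsMatching M ∧ (∀ s ∈ M, s.1 ∈ P ∧ s.2 ∈ P) ∧
  ∀ p ∈ P, ∃ s ∈ M, p = s.1 ∨ p = s.2

/-- Number of (unordered) crossing pairs of segments of `M`. -/
def phiX (M : Finset Seg) : ℕ :=
  Set.ncard {z : Sym2 Seg | ∃ u t : Seg, z = s(u, t) ∧ u ∈ M ∧ t ∈ M ∧ Cross u t}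

/-- Number of segments of `M` crossed by the line `l`. -/
def phiLine (l : Set Pl) (M : Finset Seg) : ℕ :=
  Set.ncard {s : Seg | s ∈ M ∧ LineCross l s}

/-- All lines through two points of `P`. -/
def linesOf (P : Finset Pl) : Set (Set Pl) :=
  {l | ∃ p ∈ P, ∃ q ∈ P, p ≠ q ∧ l = lineThrough p q}

/-- The line potential with respect to a set of lines `L`. -/
def phiL (L : Set (Set Pl)) (M : Finset Seg) : ℕ := ∑ᶠ l ∈ L, phiLine l M

/-- A flip in the matching version: replace a crossing pair by one of the two
non-crossing pairs on the same four endpoints. -/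
def IsFlip (M M' : Finset Seg) : Prop :=
  ∃ p1 p2 p3 p4 : Pl,
    Cross (p1, p3) (p2, p4) ∧ (p1, p3) ∈ M ∧ (p2, p4) ∈ M ∧
    ((¬ Cross (p1, p4) (p2, p3) ∧ M' = (M \ {(p1, p3), (p2, p4)}) ∪ {(p1, p4), (p2, p3)}) ∨
     (¬ Cross (p1, p2) (p3, p4) ∧ M' = (M \ {(p1, p3), (p2, p4)}) ∪ {(p1, p2), (p3, p4)}))

/-- `t1, t2` reconnect the four endpoints of `s1, s2` forming a 4-cycle. -/
def Rewires (s1 s2 t1 t2 : Seg) : Prop :=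
  ∃ a b c d : Pl, ({s1.1, s1.2} : Set Pl) = {a, b} ∧ ({s2.1, s2.2} : Set Pl) = {c, d} ∧
    ((({t1.1, t1.2} : Set Pl) = {a, c} ∧ ({t2.1, t2.2} : Set Pl) = {b, d}) ∨
     (({t1.1, t1.2} : Set Pl) = {a, d} ∧ ({t2.1, t2.2} : Set Pl) = {b, c}))

/-- A flip in the multigraph (multiset) version. -/
def IsFlipMS (M M' : Multiset Seg) : Prop :=
  ∃ p1 p2 p3 p4 : Pl, Cross (p1, p3) (p2, p4) ∧ (p1, p3) ∈ M ∧ (p2, p4) ∈ M ∧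
    ∃ t1 t2 : Seg, Rewires (p1, p3) (p2, p4) t1 t2 ∧ ¬ Cross t1 t2 ∧
      M' = t1 ::ₘ t2 ::ₘ ((M.erase (p1, p3)).erase (p2, p4))

/-- A red-blue perfect matching: first coordinates red, second coordinates blue. -/
def IsRBPM (R B : Finset Pl) (M : Finset Seg) : Prop :=
  IsMatching M ∧ (∀ s ∈ M, s.1 ∈ R ∧ s.2 ∈ B) ∧
  (∀ p ∈ R, ∃ s ∈ M, p = s.1) ∧ (∀ p ∈ B, ∃ s ∈ M, p = s.2)

/-- A flip in the red-blue matching version (the replacement pair is forced). -/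
def IsRBFlip (M M' : Finset Seg) : Prop :=
  ∃ r1 b1 r2 b2 : Pl, Cross (r1, b1) (r2, b2) ∧ (r1, b1) ∈ M ∧ (r2, b2) ∈ M ∧
    ¬ Cross (r1, b2) (r2, b1) ∧ M' = (M \ {(r1, b1), (r2, b2)}) ∪ {(r1, b2), (r2, b1)}

/-- `T` is (the edge set of) a tour on `N` points. -/
def IsTour (T : Finset Seg) (N : ℕ) : Prop :=
  3 ≤ N ∧ ∃ v : Fin N → Pl, Function.Injective v ∧
    T = Finset.image (fun i : Fin N => (v i, v (finRotate N i))) Finset.univ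

/-- A flip in the TSP version: remove two crossing tour edges and reconnect the
four endpoints. -/
def IsTSPFlip (T T' : Finset Seg) : Prop :=
  ∃ s1 s2 t1 t2 : Seg, Cross s1 s2 ∧ s1 ∈ T ∧ s2 ∈ T ∧ Rewires s1 s2 t1 t2 ∧
    T' = (T \ {s1, s2}) ∪ {t1, t2}

/-- `a` and `b` are consecutive points on the convex-hull boundary of `Q`. -/
def HullEdge (Q : Finset Pl) (a b : Pl) : Prop :=
  a ∈ Q ∧ b ∈ Q ∧ a ≠ b ∧
  ((∀ c ∈ Q, c ≠ a → c ≠ b → 0 < sideVal a b c) ∨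
   (∀ c ∈ Q, c ≠ a → c ≠ b → sideVal a b c < 0))

/-- The line-potential drop of a flip, independent of the ambient matching. -/
def flipDrop (P : Finset Pl) (p1 p2 p3 p4 : Pl) : ℤ :=
  ∑ᶠ l ∈ linesOf P,
    ((phiLine l {(p1, p3), (p2, p4)} : ℤ) - (phiLine l {(p1, p4), (p2, p3)} : ℤ))

lemma seg_mem_iff {a b x : Pl} : x ∈ segment ℝ a b ↔ ∃ t : ℝ, 0 ≤ t ∧ t ≤ 1 ∧ x = (1-t) • a + t • b := by
  rw [segment_eq_image]
  constructor
  · rintro ⟨t, ht, rfl⟩; exact ⟨t, ht.1, ht.2, rfl⟩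
  · rintro ⟨t, h0, h1, rfl⟩; exact ⟨t, ⟨h0, h1⟩, rfl⟩

lemma sideVal_affine (a b u v : Pl) (t : ℝ) :
    sideVal a b ((1-t) • u + t • v) = (1-t) * sideVal a b u + t * sideVal a b v := by
  simp [sideVal, Prod.smul_def]
  ring

lemma sideVal_fst (a b : Pl) : sideVal a b a = 0 := by simp [sideVal]
lemma sideVal_snd (a b : Pl) : sideVal a b b = 0 := by simp [sideVal]; ring

lemma sideVal_seg_zero {a b x : Pl} (h : x ∈ segment ℝ a b) : sideVal a b x = 0 := by
  obtain ⟨t, _, _, rfl⟩ := seg_mem_iff.mp h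
  rw [sideVal_affine, sideVal_fst, sideVal_snd]; ring

/-- if v ≠ 0 is parallel to u and w then u ∥ w, in det form -/
lemma det_aux {v u w : Pl} (h1 : v.1 * u.2 - v.2 * u.1 = 0) (h2 : v.1 * w.2 - v.2 * w.1 = 0)
    (hv : v ≠ 0) : u.1 * w.2 - u.2 * w.1 = 0 := by
  have hv' : v.1 ≠ 0 ∨ v.2 ≠ 0 := by
    by_contra h; push_neg at h; exact hv (Prod.ext h.1 h.2)
  rcases hv' with h | h
  · have : (u.1 * w.2 - u.2 * w.1) * v.1 = (v.1 * w.2 - v.2 * w.1) * u.1 - (v.1 * u.2 - v.2 * u.1) * w.1 := by ring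
    rw [h1, h2] at this
    have h0 : (u.1 * w.2 - u.2 * w.1) * v.1 = 0 := by linarith
    rcases mul_eq_zero.mp h0 with h' | h'
    · exact h'
    · exact absurd h' h
  · have : (u.1 * w.2 - u.2 * w.1) * v.2 = (v.1 * w.2 - v.2 * w.1) * u.2 - (v.1 * u.2 - v.2 * u.1) * w.2 := by ring
    rw [h1, h2] at this
    have h0 : (u.1 * w.2 - u.2 * w.1) * v.2 = 0 := by linarith
    rcases mul_eq_zero.mp h0 with h' | h'
    · exact h'
    · exact absurd h' h

lemma line_param {q r v : Pl} (hqr : q ≠ r) (h : sideVal q r v = 0) :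
    ∃ τ : ℝ, v = (1-τ) • q + τ • r := by
  have hne : r.1 - q.1 ≠ 0 ∨ r.2 - q.2 ≠ 0 := by
    by_contra hh; push_neg at hh
    exact hqr (Prod.ext (by linarith [hh.1]) (by linarith [hh.2])).symm
  simp only [sideVal] at h
  rcases hne with hne | hne
  · refine ⟨(v.1 - q.1)/(r.1 - q.1), ?_⟩
    have h2 : v.2 - q.2 = (r.2 - q.2) * ((v.1 - q.1)/(r.1-q.1)) := by
      field_simp; linarith
    apply Prod.ext <;> simp [Prod.smul_def] <;> field_simp <;> nlinarith [h2]
  · refine ⟨(v.2 - q.2)/(r.2 - q.2), ?_⟩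
    have h2 : v.1 - q.1 = (r.1 - q.1) * ((v.2 - q.2)/(r.2-q.2)) := by
      field_simp; linarith
    apply Prod.ext <;> simp [Prod.smul_def] <;> field_simp <;> nlinarith [h2]

lemma collinear_of_sideVal {a b c : Pl} (h : sideVal a b c = 0) :
    Collinear ℝ ({a, b, c} : Set Pl) := by
  by_cases hab : a = b
  · subst hab
    have : ({a, a, c} : Set Pl) = {a, c} := by simp
    rw [this]; exact collinear_pair ℝ a c
  · obtain ⟨τ, rfl⟩ := line_param hab h
    have hmem : (1-τ) • a + τ • b ∈ affineSpan ℝ ({a, b} : Set Pl) := by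
      have := AffineMap.lineMap_mem_affineSpan_pair (k := ℝ) τ a b
      have heq : (1-τ) • a + τ • b = τ • (b - a) + a := by
        apply Prod.ext <;> simp [Prod.smul_def] <;> ring
      rw [heq]
      simpa [AffineMap.lineMap_apply] using this
    have hcol := collinear_insert_of_mem_affineSpan_pair hmem
    have hset : ({a, b, (1-τ) • a + τ • b} : Set Pl) = {(1-τ) • a + τ • b, a, b} := by
      ext z; simp; tauto
    rw [hset]; exact hcol

lemma cross_symm {s t : Seg} (h : Cross s t) : Cross t s := by
  obtain ⟨x, hx, h1, h2, h3, h4⟩ := h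
  exact ⟨x, by rw [Set.inter_comm]; exact hx, h3, h4, h1, h2⟩

lemma cross_irrefl (s : Seg) : ¬ Cross s s := by
  rintro ⟨x, hx, h1, _⟩
  apply h1
  have : s.1 ∈ segSet s ∩ segSet s := ⟨left_mem_segment ℝ _ _, left_mem_segment ℝ _ _⟩
  rw [hx] at this; simpa using this.symm

lemma cross_pt {s t : Seg} (h : Cross s t) :
    ∃ x : Pl, x ∈ segSet s ∧ x ∈ segSet t ∧ x ≠ s.1 ∧ x ≠ s.2 ∧ x ≠ t.1 ∧ x ≠ t.2 := by
  obtain ⟨x, hx, h1, h2, h3, h4⟩ := h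
  have : x ∈ segSet s ∩ segSet t := hx ▸ rfl
  exact ⟨x, this.1, this.2, h1, h2, h3, h4⟩

lemma combo_zero {A B t : ℝ} (h0 : 0 ≤ t) (h1 : t ≤ 1) (h : (1-t) * A + t * B = 0)
    (hA : A ≠ 0) (hB : B ≠ 0) : A * B < 0 := by
  have key : ∀ A' B' : ℝ, A' < 0 → B' < 0 → (1-t) * A' + t * B' = 0 → False := by
    intro A' B' hA' hB' hh
    have e1 : (1-t)*A' ≤ 0 := mul_nonpos_of_nonneg_of_nonpos (by linarith) hA'.le
    have e2 : t*B' ≤ 0 := mul_nonpos_of_nonneg_of_nonpos h0 hB'.le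
    have e3 : (1-t)*A' = 0 := by linarith
    have e4 : t*B' = 0 := by linarith
    rcases mul_eq_zero.mp e3 with h' | h'
    · rcases mul_eq_zero.mp e4 with h'' | h'' <;> nlinarith
    · linarith
  rcases lt_trichotomy A 0 with hA' | hA' | hA'
  · rcases lt_trichotomy B 0 with hB' | hB' | hB'
    · exact absurd (key A B hA' hB' h) (by simp)
    · exact absurd hB' hB
    · nlinarith
  · exact absurd hA' hA
  · rcases lt_trichotomy B 0 with hB' | hB' | hB'
    · nlinarith
    · exact absurd hB' hB
    · exact absurd (key (-A) (-B) (by linarith) (by linarith) (by linarith)) (by simp)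

/-- From a crossing, the two endpoints of the first segment lie strictly on
opposite sides of the line through the second. -/
lemma cross_sides {a b c d : Pl} (h : Cross (a, b) (c, d))
    (hA : sideVal c d a ≠ 0) (hB : sideVal c d b ≠ 0) :
    sideVal c d a * sideVal c d b < 0 := by
  obtain ⟨x, hxs, hxt, _, _, _, _⟩ := cross_pt h
  obtain ⟨t, ht0, ht1, rfl⟩ := seg_mem_iff.mp hxs
  have hz : sideVal c d ((1-t) • a + t • b) = 0 := sideVal_seg_zero hxt
  rw [sideVal_affine] at hz
  exact combo_zero ht0 ht1 hz hA hB

/-- Key convexity lemma: if `a, b` straddle the line `qr`, the segment `qr` meets a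
convex set `Q` containing segment `ab` but not `q, r`, then the segments cross. -/
lemma cross_of {a b q r : Pl} {Q : Set Pl} (hQ : Convex ℝ Q)
    (habQ : segment ℝ a b ⊆ Q) (hqQ : q ∉ Q) (hrQ : r ∉ Q)
    (hqr : q ≠ r) (hba : a ≠ b)
    (hstrad : sideVal q r a * sideVal q r b < 0)
    {u : Pl} (hu : u ∈ segment ℝ q r) (huQ : u ∈ Q) :
    Cross (a, b) (q, r) := by
  set sa := sideVal q r a with hsa
  set sb := sideVal q r b with hsb
  have hsane : sa ≠ 0 := fun h => by rw [h] at hstrad; simp at hstrad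
  have hsbne : sb ≠ 0 := fun h => by rw [h] at hstrad; simp at hstrad
  have hden : sa - sb ≠ 0 := by
    intro h
    have : sa = sb := by linarith
    rw [this] at hstrad; nlinarith
  set t := sa / (sa - sb) with hts
  have hdiff : t - 1 = sb / (sa - sb) := by rw [hts]; field_simp; ring
  have ht01 : 0 < t ∧ t < 1 := by
    rcases lt_or_gt_of_ne hsane with h | h
    · have hb : 0 < sb := by nlinarith
      have hd : sa - sb < 0 := by linarith
      refine ⟨div_pos_of_neg_of_neg h hd, ?_⟩
      have := div_neg_of_pos_of_neg hb hd
      rw [← hdiff] at this; linarith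
    · have hb : sb < 0 := by nlinarith
      have hd : 0 < sa - sb := by linarith
      refine ⟨div_pos h hd, ?_⟩
      have := div_neg_of_neg_of_pos hb hd
      rw [← hdiff] at this; linarith
  obtain ⟨ht0, ht1⟩ := ht01
  set v : Pl := (1-t) • a + t • b with hv
  have hvab : v ∈ segment ℝ a b := seg_mem_iff.mpr ⟨t, ht0.le, ht1.le, rfl⟩
  have hvQ : v ∈ Q := habQ hvab
  have hv0 : sideVal q r v = 0 := by
    rw [hv, sideVal_affine, ← hsa, ← hsb, hts]
    field_simp
    ring
  obtain ⟨τ, hvτ⟩ := line_param hqr hv0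
  obtain ⟨μ, hμ0, hμ1, huμ⟩ := seg_mem_iff.mp hu
  have hτ0 : 0 ≤ τ := by
    by_contra hτ
    push_neg at hτ
    have hd : 0 < μ - τ := by linarith
    set lam := μ / (μ - τ) with hlam
    have h0 : 0 ≤ lam := div_nonneg hμ0 hd.le
    have h1 : lam ≤ 1 := by rw [hlam, div_le_one hd]; linarith
    have hmem := hQ huQ hvQ (by linarith : (0:ℝ) ≤ 1 - lam) h0 (by ring)
    apply hqQ
    have : (1 - lam) • u + lam • v = q := by
      rw [huμ, hvτ]
      apply Prod.ext <;> simp [Prod.smul_def, hlam] <;> field_simp <;> ring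
    rwa [this] at hmem
  have hτ1 : τ ≤ 1 := by
    by_contra hτ
    push_neg at hτ
    have hd : 0 < τ - μ := by linarith
    set lam := (1 - μ) / (τ - μ) with hlam
    have h0 : 0 ≤ lam := div_nonneg (by linarith) hd.le
    have h1 : lam ≤ 1 := by rw [hlam, div_le_one hd]; linarith
    have hmem := hQ huQ hvQ (by linarith : (0:ℝ) ≤ 1 - lam) h0 (by ring)
    apply hrQ
    have : (1 - lam) • u + lam • v = r := by
      rw [huμ, hvτ]
      apply Prod.ext <;> simp [Prod.smul_def, hlam] <;> field_simp <;> ring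
    rwa [this] at hmem
  have hvqr : v ∈ segment ℝ q r := seg_mem_iff.mpr ⟨τ, hτ0, hτ1, hvτ⟩
  have hvq : v ≠ q := fun h => hqQ (h ▸ hvQ)
  have hvr : v ≠ r := fun h => hrQ (h ▸ hvQ)
  have hva : v ≠ a := by
    intro h
    apply hsane; rw [hsa, ← h]; exact hv0
  have hvb : v ≠ b := by
    intro h
    apply hsbne; rw [hsb, ← h]; exact hv0
  refine ⟨v, ?_, hva, hvb, hvq, hvr⟩
  apply Set.eq_singleton_iff_unique_mem.mpr
  refine ⟨⟨hvab, hvqr⟩, ?_⟩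
  rintro w ⟨hwab, hwqr⟩
  by_contra hne
  have d1 : sideVal a b w = 0 := sideVal_seg_zero hwab
  have d2 : sideVal a b v = 0 := sideVal_seg_zero hvab
  have d3 : sideVal q r w = 0 := sideVal_seg_zero hwqr
  simp only [sideVal] at d1 d2 d3 hv0
  have hwv : w - v ≠ (0 : Pl) := sub_ne_zero.mpr hne
  have hbane : b - a ≠ (0 : Pl) := sub_ne_zero.mpr (Ne.symm hba)
  have f1 : (w-v).1 * (b-a).2 - (w-v).2 * (b-a).1 = 0 := by
    simp only [Prod.fst_sub, Prod.snd_sub]; linear_combination d2 - d1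
  have f2 : (w-v).1 * (r-q).2 - (w-v).2 * (r-q).1 = 0 := by
    simp only [Prod.fst_sub, Prod.snd_sub]; linear_combination hv0 - d3
  have g : (b-a).1 * (r-q).2 - (b-a).2 * (r-q).1 = 0 := det_aux f1 f2 hwv
  have f3 : (b-a).1 * (a-v).2 - (b-a).2 * (a-v).1 = 0 := by
    simp only [Prod.fst_sub, Prod.snd_sub]; linear_combination -d2
  have g2 : (a-v).1 * (r-q).2 - (a-v).2 * (r-q).1 = 0 := det_aux f3 g hbane
  apply hsane
  rw [hsa]
  simp only [sideVal]
  simp only [Prod.fst_sub, Prod.snd_sub] at g2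
  linear_combination -g2 + hv0

lemma sideVal_ne {P : Finset Pl} (hgp : GenPos (P : Set Pl)) {a b c : Pl}
    (ha : a ∈ P) (hb : b ∈ P) (hc : c ∈ P) (hab : a ≠ b) (hac : a ≠ c) (hbc : b ≠ c) :
    sideVal a b c ≠ 0 :=
  fun h => hgp a ha b hb c hc hab hac hbc (collinear_of_sideVal h)

lemma combo_sign {A B t : ℝ} (h0 : 0 ≤ t) (h1 : t ≤ 1) (hAB : 0 < A * B) :
    0 < A * ((1-t)*A + t*B) := by
  have hA : A ≠ 0 := by rintro rfl; simp at hAB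
  have hA2 : 0 < A * A := mul_self_pos.mpr hA
  rcases lt_or_eq_of_le h0 with ht | ht
  · nlinarith [mul_nonneg (by linarith : (0:ℝ) ≤ 1 - t) hA2.le, mul_pos ht hAB]
  · rw [← ht]; nlinarith

lemma core {p1 p2 p3 p4 q r : Pl}
    (hx : ∃ x : Pl, x ∈ segment ℝ p1 p3 ∧ x ∈ segment ℝ p2 p4)
    (h13 : 0 < sideVal q r p1 * sideVal q r p3)
    (h24 : 0 < sideVal q r p2 * sideVal q r p4)
    (h14 : sideVal q r p1 * sideVal q r p4 < 0) : False := by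
  obtain ⟨x, hx13, hx24⟩ := hx
  obtain ⟨t, ht0, ht1, rfl⟩ := seg_mem_iff.mp hx13
  obtain ⟨u, hu0, hu1, hux⟩ := seg_mem_iff.mp hx24
  have e1 : sideVal q r ((1-t) • p1 + t • p3)
      = (1-t) * sideVal q r p1 + t * sideVal q r p3 := sideVal_affine _ _ _ _ _
  have e2 : sideVal q r ((1-t) • p1 + t • p3)
      = (1-u) * sideVal q r p2 + u * sideVal q r p4 := by
    rw [hux, sideVal_affine]
  have k1 := combo_sign ht0 ht1 h13
  have k2 := combo_sign hu0 hu1 h24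
  rw [← e1] at k1
  rw [← e2] at k2
  nlinarith [mul_pos k1 k2, mul_pos h13 h24]

lemma pointwise (P : Finset Pl) (hconv : ConvexPos (P : Set Pl)) (hgp : GenPos (P : Set Pl))
    (p1 p2 p3 p4 q r : Pl)
    (h1P : p1 ∈ P) (h2P : p2 ∈ P) (h3P : p3 ∈ P) (h4P : p4 ∈ P) (hqP : q ∈ P) (hrP : r ∈ P)
    (h13 : p1 ≠ p3) (h24 : p2 ≠ p4) (hqr : q ≠ r)
    (hq1 : q ≠ p1) (hq2 : q ≠ p2) (hq3 : q ≠ p3) (hq4 : q ≠ p4)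
    (hr1 : r ≠ p1) (hr2 : r ≠ p2) (hr3 : r ≠ p3) (hr4 : r ≠ p4)
    (hc : Cross (p1, p3) (p2, p4)) :
    ((if Cross (p1, p4) (q, r) then 1 else 0) + (if Cross (p2, p3) (q, r) then 1 else 0) : ℕ)
      ≤ (if Cross (p1, p3) (q, r) then 1 else 0) + (if Cross (p2, p4) (q, r) then 1 else 0) := by
  set Q : Set Pl := convexHull ℝ ({p1, p2, p3, p4} : Set Pl) with hQdef
  have hQconv : Convex ℝ Q := convex_convexHull ℝ _
  have hsub : ∀ z : Pl, z ∉ ({p1,p2,p3,p4} : Set Pl) → z ∈ P → z ∉ Q := by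
    intro z hz hzP hzQ
    apply hconv z hzP
    apply convexHull_mono _ hzQ
    intro w hw
    refine ⟨?_, ?_⟩
    · rcases hw with h | h | h | h <;> subst h <;> assumption
    · intro hwz
      rw [Set.mem_singleton_iff] at hwz
      subst hwz; exact hz hw
  have hqQ : q ∉ Q := hsub q (by simp [hq1, hq2, hq3, hq4]) hqP
  have hrQ : r ∉ Q := hsub r (by simp [hr1, hr2, hr3, hr4]) hrP
  have hmem : ∀ z ∈ ({p1,p2,p3,p4} : Set Pl), z ∈ Q := fun z hz => subset_convexHull ℝ _ hz
  have hseg : ∀ z w : Pl, z ∈ ({p1,p2,p3,p4} : Set Pl) → w ∈ ({p1,p2,p3,p4} : Set Pl) →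
      segment ℝ z w ⊆ Q := fun z w hz hw => hQconv.segment_subset (hmem z hz) (hmem w hw)
  have s1ne : sideVal q r p1 ≠ 0 := sideVal_ne hgp hqP hrP h1P hqr hq1 hr1
  have s2ne : sideVal q r p2 ≠ 0 := sideVal_ne hgp hqP hrP h2P hqr hq2 hr2
  have s3ne : sideVal q r p3 ≠ 0 := sideVal_ne hgp hqP hrP h3P hqr hq3 hr3
  have s4ne : sideVal q r p4 ≠ 0 := sideVal_ne hgp hqP hrP h4P hqr hq4 hr4
  have hxd : ∃ x : Pl, x ∈ segment ℝ p1 p3 ∧ x ∈ segment ℝ p2 p4 := by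
    obtain ⟨x, hx1, hx2, _⟩ := cross_pt hc
    exact ⟨x, hx1, hx2⟩
  by_cases hAB : Cross (p1, p4) (q, r) ∨ Cross (p2, p3) (q, r)
  case neg =>
    push_neg at hAB
    simp [hAB.1, hAB.2]
  -- get a point u of segment q r inside Q
  have hu : ∃ u : Pl, u ∈ segment ℝ q r ∧ u ∈ Q := by
    rcases hAB with hcA | hcB
    · obtain ⟨u, hu1, hu2, _⟩ := cross_pt hcA
      exact ⟨u, hu2, hseg p1 p4 (by simp) (by simp) hu1⟩
    · obtain ⟨u, hu1, hu2, _⟩ := cross_pt hcB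
      exact ⟨u, hu2, hseg p2 p3 (by simp) (by simp) hu1⟩
  obtain ⟨u, huqr, huQ⟩ := hu
  have hndA : ¬ Cross (p1, p3) (q, r) → 0 < sideVal q r p1 * sideVal q r p3 := by
    intro hdA
    rcases lt_trichotomy (sideVal q r p1 * sideVal q r p3) 0 with h | h | h
    · exact absurd (cross_of hQconv (hseg p1 p3 (by simp) (by simp)) hqQ hrQ hqr h13 h huqr huQ) hdA
    · exact absurd h (mul_ne_zero s1ne s3ne)
    · exact h
  have hndB : ¬ Cross (p2, p4) (q, r) → 0 < sideVal q r p2 * sideVal q r p4 := by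
    intro hdB
    rcases lt_trichotomy (sideVal q r p2 * sideVal q r p4) 0 with h | h | h
    · exact absurd (cross_of hQconv (hseg p2 p4 (by simp) (by simp)) hqQ hrQ hqr h24 h huqr huQ) hdB
    · exact absurd h (mul_ne_zero s2ne s4ne)
    · exact h
  by_cases hdA : Cross (p1, p3) (q, r)
  · by_cases hdB : Cross (p2, p4) (q, r)
    · simp [hdA, hdB]
      split <;> split <;> omega
    · -- dA true, dB false: need not both cA and cB
      have hnot : ¬ (Cross (p1, p4) (q, r) ∧ Cross (p2, p3) (q, r)) := by
        rintro ⟨hcA, hcB⟩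
        have sc14 := cross_sides hcA s1ne s4ne
        have sc23 := cross_sides hcB s2ne s3ne
        have sdA := cross_sides hdA s1ne s3ne
        have h24p := hndB hdB
        nlinarith [mul_pos_of_neg_of_neg sc14 sc23, mul_neg_of_neg_of_pos sdA h24p]
      by_cases hcA : Cross (p1, p4) (q, r) <;> by_cases hcB : Cross (p2, p3) (q, r) <;>
        simp [hcA, hcB, hdA, hdB]
      exact absurd ⟨hcA, hcB⟩ hnot
  · by_cases hdB : Cross (p2, p4) (q, r)
    · have hnot : ¬ (Cross (p1, p4) (q, r) ∧ Cross (p2, p3) (q, r)) := by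
        rintro ⟨hcA, hcB⟩
        have sc14 := cross_sides hcA s1ne s4ne
        have sc23 := cross_sides hcB s2ne s3ne
        have sdB := cross_sides hdB s2ne s4ne
        have h13p := hndA hdA
        nlinarith [mul_pos_of_neg_of_neg sc14 sc23, mul_neg_of_pos_of_neg h13p sdB]
      by_cases hcA : Cross (p1, p4) (q, r) <;> by_cases hcB : Cross (p2, p3) (q, r) <;>
        simp [hcA, hcB, hdA, hdB]
      exact absurd ⟨hcA, hcB⟩ hnot
    · exfalso
      have h13p := hndA hdA
      have h24p := hndB hdB
      rcases hAB with hcA | hcB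
      · exact core hxd h13p h24p (cross_sides hcA s1ne s4ne)
      · have sc23 := cross_sides hcB s2ne s3ne
        have hs14 : sideVal q r p1 * sideVal q r p4 < 0 := by
          by_contra hge
          push_neg at hge
          nlinarith [mul_pos h13p h24p, mul_nonpos_of_nonneg_of_nonpos hge sc23.le]
        exact core hxd h13p h24p hs14

lemma crossPairs_finite (N : Finset Seg) :
    {z : Sym2 Seg | ∃ u t : Seg, z = s(u, t) ∧ u ∈ N ∧ t ∈ N ∧ Cross u t}.Finite := by
  apply Set.Finite.subset ((N.finite_toSet.prod N.finite_toSet).image (fun p => s(p.1, p.2)))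
  rintro z ⟨u, t, rfl, hu, ht, _⟩
  exact ⟨(u, t), ⟨hu, ht⟩, rfl⟩

lemma mk_a_injective (a : Seg) : Function.Injective (fun e => s(a, e)) := by
  intro x y h
  simp only [Sym2.eq_iff] at h
  rcases h with ⟨_, h⟩ | ⟨h1, h2⟩
  · exact h
  · rw [h2, ← h1]

lemma phiX_union_pair (T : Finset Seg) (a b : Seg) (haT : a ∉ T) (hbT : b ∉ T) (hab : a ≠ b) :
    phiX (T ∪ {a, b}) = phiX T + (T.filter (fun e => Cross a e)).card
      + (T.filter (fun e => Cross b e)).card + (if Cross a b then 1 else 0) := by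
  classical
  set ST := {z : Sym2 Seg | ∃ u t : Seg, z = s(u, t) ∧ u ∈ T ∧ t ∈ T ∧ Cross u t} with hST
  set A := (fun e => s(a, e)) '' {e : Seg | e ∈ T ∧ Cross a e} with hA
  set B := (fun e => s(b, e)) '' {e : Seg | e ∈ T ∧ Cross b e} with hB
  set C := (if Cross a b then ({s(a, b)} : Set (Sym2 Seg)) else ∅) with hC
  have hCsub : C ⊆ {s(a, b)} := by rw [hC]; split <;> simp
  have hset : {z : Sym2 Seg | ∃ u t : Seg, z = s(u, t) ∧ u ∈ T ∪ {a, b} ∧ t ∈ T ∪ {a, b} ∧ Cross u t}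
      = ST ∪ A ∪ B ∪ C := by
    ext z
    constructor
    · rintro ⟨u, t, rfl, hu, ht, hcr⟩
      simp only [Finset.mem_union, Finset.mem_insert, Finset.mem_singleton] at hu ht
      rcases hu with hu | hu | hu <;> rcases ht with ht | ht | ht
      · exact Or.inl (Or.inl (Or.inl ⟨u, t, rfl, hu, ht, hcr⟩))
      · subst ht; exact Or.inl (Or.inl (Or.inr ⟨u, ⟨hu, cross_symm hcr⟩, Sym2.eq_swap⟩))
      · subst ht; exact Or.inl (Or.inr ⟨u, ⟨hu, cross_symm hcr⟩, Sym2.eq_swap⟩)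
      · subst hu; exact Or.inl (Or.inl (Or.inr ⟨t, ⟨ht, hcr⟩, rfl⟩))
      · subst hu; subst ht; exact absurd hcr (cross_irrefl _)
      · subst hu; subst ht; right; rw [hC, if_pos hcr]; rfl
      · subst hu; exact Or.inl (Or.inr ⟨t, ⟨ht, hcr⟩, rfl⟩)
      · subst hu; subst ht; right; rw [hC, if_pos (cross_symm hcr)]
        simp [Sym2.eq_swap]
      · subst hu; subst ht; exact absurd hcr (cross_irrefl _)
    · rintro (((⟨u, t, rfl, hu, ht, hcr⟩ | ⟨e, ⟨he, hcr⟩, rfl⟩) | ⟨e, ⟨he, hcr⟩, rfl⟩) | hz)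
      · exact ⟨u, t, rfl, by simp [hu], by simp [ht], hcr⟩
      · exact ⟨a, e, rfl, by simp, by simp [he], hcr⟩
      · exact ⟨b, e, rfl, by simp, by simp [he], hcr⟩
      · have := hCsub hz
        rw [Set.mem_singleton_iff] at this
        subst this
        have hcr : Cross a b := by
          rw [hC] at hz; by_contra h; rw [if_neg h] at hz; exact hz
        exact ⟨a, b, rfl, by simp, by simp, hcr⟩
  have hSTfin : ST.Finite := crossPairs_finite T
  have hTfin : {e : Seg | e ∈ T ∧ Cross a e}.Finite :=
    T.finite_toSet.subset (fun e he => he.1)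
  have hTfin' : {e : Seg | e ∈ T ∧ Cross b e}.Finite :=
    T.finite_toSet.subset (fun e he => he.1)
  have hAfin : A.Finite := hTfin.image _
  have hBfin : B.Finite := hTfin'.image _
  have hCfin : C.Finite := (Set.finite_singleton _).subset hCsub
  -- disjointness
  have hdAB : Disjoint A B := by
    rw [Set.disjoint_left]
    rintro z ⟨e, ⟨he, _⟩, rfl⟩ ⟨f, ⟨hf, _⟩, hzf⟩
    simp only [Sym2.eq_iff] at hzf
    rcases hzf with ⟨h1, h2⟩ | ⟨h1, h2⟩
    · exact hab h1.symm
    · exact hbT (by rw [h1]; exact he)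
  have hdSTA : Disjoint ST A := by
    rw [Set.disjoint_left]
    rintro z ⟨u, t, rfl, hu, ht, _⟩ ⟨e, ⟨he, _⟩, hze⟩
    simp only [Sym2.eq_iff] at hze
    rcases hze with ⟨h1, h2⟩ | ⟨h1, h2⟩
    · exact haT (by rw [h1]; exact hu)
    · exact haT (by rw [h1]; exact ht)
  have hdSTB : Disjoint ST B := by
    rw [Set.disjoint_left]
    rintro z ⟨u, t, rfl, hu, ht, _⟩ ⟨e, ⟨he, _⟩, hze⟩
    simp only [Sym2.eq_iff] at hze
    rcases hze with ⟨h1, h2⟩ | ⟨h1, h2⟩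
    · exact hbT (by rw [h1]; exact hu)
    · exact hbT (by rw [h1]; exact ht)
  have hdC : Disjoint (ST ∪ A ∪ B) C := by
    rw [Set.disjoint_left]
    rintro z hz hzC
    have hzab := hCsub hzC
    rw [Set.mem_singleton_iff] at hzab
    subst hzab
    rcases hz with (hz | ⟨e, ⟨he, _⟩, hze⟩) | ⟨e, ⟨he, _⟩, hze⟩
    · obtain ⟨u, t, hzut, hu, ht, _⟩ := hz
      rw [Sym2.eq_iff] at hzut
      rcases hzut with ⟨h1, h2⟩ | ⟨h1, h2⟩
      · exact haT (by rw [h1]; exact hu)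
      · exact haT (by rw [h1]; exact ht)
    · simp only [Sym2.eq_iff] at hze
      rcases hze with ⟨h1, h2⟩ | ⟨h1, h2⟩
      · exact hbT (by rw [← h2]; exact he)
      · exact hab h1
    · simp only [Sym2.eq_iff] at hze
      rcases hze with ⟨h1, h2⟩ | ⟨h1, h2⟩
      · exact hab h1.symm
      · exact haT (by rw [← h2]; exact he)
  have hcard : phiX (T ∪ {a, b}) = ST.ncard + A.ncard + B.ncard + C.ncard := by
    rw [phiX, hset, Set.ncard_union_eq hdC (((hSTfin.union hAfin).union hBfin)) hCfin,
      Set.ncard_union_eq (Set.disjoint_union_left.mpr ⟨hdSTB, hdAB⟩) (hSTfin.union hAfin) hBfin,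
      Set.ncard_union_eq hdSTA hSTfin hAfin]
  rw [hcard]
  congr 1
  · congr 1
    · congr 1
      · rw [Set.ncard_image_of_injective _ (mk_a_injective a)]
        rw [show {e : Seg | e ∈ T ∧ Cross a e} = ↑(T.filter (fun e => Cross a e)) by
          ext e; simp]
        exact Set.ncard_coe_finset _
    · rw [Set.ncard_image_of_injective _ (mk_a_injective b)]
      rw [show {e : Seg | e ∈ T ∧ Cross b e} = ↑(T.filter (fun e => Cross b e)) by
        ext e; simp]
      exact Set.ncard_coe_finset _
  · rw [hC]; split <;> simp

/-- for points in convex position, a flip strictly decreases the number of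
crossing pairs. -/
theorem stmt6 (P : Finset Pl) (hconv : ConvexPos (P : Set Pl)) (hgp : GenPos (P : Set Pl))
    (M M' : Finset Seg) (hpm : IsPM P M)
    (p1 p2 p3 p4 : Pl)
    (h13 : (p1, p3) ∈ M) (h24 : (p2, p4) ∈ M)
    (hc : Cross (p1, p3) (p2, p4)) (hnc : ¬ Cross (p1, p4) (p2, p3))
    (hM' : M' = (M \ {(p1, p3), (p2, p4)}) ∪ {(p1, p4), (p2, p3)}) :
    phiX M' < phiX M := by
  obtain ⟨⟨hndeg, hdisj⟩, hin, _⟩ := hpm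
  have hseg_ne : ((p1, p3) : Seg) ≠ (p2, p4) := by
    intro h; rw [h] at hc; exact cross_irrefl _ hc
  have hd1 := hdisj _ h13 _ h24 hseg_ne
  have hnm : ∀ x : Pl, ¬ (x ∈ ({p1, p3} : Set Pl) ∧ x ∈ ({p2, p4} : Set Pl)) := by
    intro x hx
    exact Set.eq_empty_iff_forall_notMem.mp hd1 x ⟨hx.1, hx.2⟩
  have h12 : p1 ≠ p2 := fun h => hnm p1 ⟨by simp, by simp [h]⟩
  have h14 : p1 ≠ p4 := fun h => hnm p1 ⟨by simp, by simp [h]⟩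
  have h32 : p3 ≠ p2 := fun h => hnm p3 ⟨by simp, by simp [h]⟩
  have h34 : p3 ≠ p4 := fun h => hnm p3 ⟨by simp, by simp [h]⟩
  have h13' : p1 ≠ p3 := hndeg _ h13
  have h24' : p2 ≠ p4 := hndeg _ h24
  have h14M : ((p1, p4) : Seg) ∉ M := by
    intro hmem
    have hne : ((p1, p4) : Seg) ≠ (p1, p3) := by
      intro h; exact h34 (congrArg Prod.snd h).symm
    have := hdisj _ hmem _ h13 hne
    exact Set.eq_empty_iff_forall_notMem.mp this p1 ⟨by simp, by simp⟩
  have h23M : ((p2, p3) : Seg) ∉ M := by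
    intro hmem
    have hne : ((p2, p3) : Seg) ≠ (p2, p4) := by
      intro h; exact h34 (congrArg Prod.snd h)
    have := hdisj _ hmem _ h24 hne
    exact Set.eq_empty_iff_forall_notMem.mp this p2 ⟨by simp, by simp⟩
  set T : Finset Seg := M \ {(p1, p3), (p2, p4)} with hT
  have h13T : ((p1, p3) : Seg) ∉ T := by simp [hT]
  have h24T : ((p2, p4) : Seg) ∉ T := by simp [hT]
  have h14T : ((p1, p4) : Seg) ∉ T := by simp [hT, h14M]
  have h23T : ((p2, p3) : Seg) ∉ T := by simp [hT, h23M]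
  have h1423 : ((p1, p4) : Seg) ≠ (p2, p3) := by
    intro h; exact h12 (congrArg Prod.fst h)
  have hMT : M = T ∪ {(p1, p3), (p2, p4)} := by
    rw [hT, Finset.sdiff_union_self_eq_union, Finset.union_eq_left.mpr]
    intro z hz
    simp only [Finset.mem_insert, Finset.mem_singleton] at hz
    rcases hz with h | h <;> subst h <;> assumption
  have e1 : phiX M = phiX T + (T.filter (fun e => Cross (p1, p3) e)).card
      + (T.filter (fun e => Cross (p2, p4) e)).card + 1 := by
    rw [hMT, phiX_union_pair T _ _ h13T h24T hseg_ne, if_pos hc]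
  have e2 : phiX M' = phiX T + (T.filter (fun e => Cross (p1, p4) e)).card
      + (T.filter (fun e => Cross (p2, p3) e)).card := by
    rw [hM', phiX_union_pair T _ _ h14T h23T h1423, if_neg hnc, Nat.add_zero]
  have key : (T.filter (fun e => Cross (p1, p4) e)).card
      + (T.filter (fun e => Cross (p2, p3) e)).card
      ≤ (T.filter (fun e => Cross (p1, p3) e)).card
      + (T.filter (fun e => Cross (p2, p4) e)).card := by
    rw [Finset.card_filter, Finset.card_filter, Finset.card_filter, Finset.card_filter,
      ← Finset.sum_add_distrib, ← Finset.sum_add_distrib]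
    apply Finset.sum_le_sum
    intro e heT
    rw [hT, Finset.mem_sdiff] at heT
    obtain ⟨heM, hens⟩ := heT
    simp only [Finset.mem_insert, Finset.mem_singleton, not_or] at hens
    obtain ⟨hne13, hne24⟩ := hens
    have hqr : e.1 ≠ e.2 := hndeg _ heM
    obtain ⟨hq, hr⟩ := hin _ heM
    have hx13 := hdisj _ heM _ h13 hne13
    have hx24 := hdisj _ heM _ h24 hne24
    have hnm13 : ∀ x : Pl, ¬ (x ∈ ({e.1, e.2} : Set Pl) ∧ x ∈ ({p1, p3} : Set Pl)) :=
      fun x hx => Set.eq_empty_iff_forall_notMem.mp hx13 x ⟨hx.1, hx.2⟩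
    have hnm24 : ∀ x : Pl, ¬ (x ∈ ({e.1, e.2} : Set Pl) ∧ x ∈ ({p2, p4} : Set Pl)) :=
      fun x hx => Set.eq_empty_iff_forall_notMem.mp hx24 x ⟨hx.1, hx.2⟩
    have hq1 : e.1 ≠ p1 := fun h => hnm13 e.1 ⟨by simp, by simp [h]⟩
    have hq3 : e.1 ≠ p3 := fun h => hnm13 e.1 ⟨by simp, by simp [h]⟩
    have hq2 : e.1 ≠ p2 := fun h => hnm24 e.1 ⟨by simp, by simp [h]⟩
    have hq4 : e.1 ≠ p4 := fun h => hnm24 e.1 ⟨by simp, by simp [h]⟩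
    have hr1 : e.2 ≠ p1 := fun h => hnm13 e.2 ⟨by simp, by simp [h]⟩
    have hr3 : e.2 ≠ p3 := fun h => hnm13 e.2 ⟨by simp, by simp [h]⟩
    have hr2 : e.2 ≠ p2 := fun h => hnm24 e.2 ⟨by simp, by simp [h]⟩
    have hr4 : e.2 ≠ p4 := fun h => hnm24 e.2 ⟨by simp, by simp [h]⟩
    have hp1 : p1 ∈ P := (hin _ h13).1
    have hp3 : p3 ∈ P := (hin _ h13).2
    have hp2 : p2 ∈ P := (hin _ h24).1
    have hp4 : p4 ∈ P := (hin _ h24).2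
    exact pointwise P hconv hgp p1 p2 p3 p4 e.1 e.2 hp1 hp2 hp3 hp4 hq hr
      h13' h24' hqr hq1 hq2 hq3 hq4 hr1 hr2 hr3 hr4 hc
  omega
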